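/- The tensor T = e_0 ⊗ e_1 ⊗ e_2 + e_1 ⊗ e_2 ⊗ e_0 + e_2 ⊗ e_0 ⊗ e_1 ∈ (ℂ³)^{⊗3} lies in the Euclidean closure of uMPS(2, 3, 3). Explicitly, with M_{0,λ} = λ²·E_{11}, M_{1,λ} = λ^{-1}·E_{12}, M_{2,λ} = λ^{-1}·E_{21} (where E_{ij} are 2×2 matrix units), one has T_3(M_{0,λ}, M_{1,λ}, M_{2,λ}) = λ⁶ e_{000} + e_{012}, which converges to T as λ → 0. -/

import Mathlib

open Matrix BigOperators

/-- The coefficient tensor of the uniform matrix product state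
`T_N(M_0,…,M_{d-1}) = Σ tr(M_{i_1} ⋯ M_{i_N}) e_{i_1} ⊗ ⋯ ⊗ e_{i_N}`,
identified with its coefficient function `(Fin N → Fin d) → ℂ`. -/
noncomputable def uT (D d N : ℕ) (M : Fin d → Matrix (Fin D) (Fin D) ℂ) :
    (Fin N → Fin d) → ℂ :=
  fun v => Matrix.trace (List.ofFn fun k => M (v k)).prod

/-- The set of uniform matrix product states in `(ℂ^d)^{⊗N}`. -/
noncomputable def uMPS (D d N : ℕ) : Set ((Fin N → Fin d) → ℂ) :=
  Set.range (uT D d N)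

/-- The coefficient tensor of `e_{000} = e_0 ⊗ e_0 ⊗ e_0`. -/
noncomputable def e000 : (Fin 3 → Fin 3) → ℂ :=
  fun v => if v = ![0, 0, 0] then 1 else 0

/-- The coefficient tensor of
`e_{012} = e_0 ⊗ e_1 ⊗ e_2 + e_1 ⊗ e_2 ⊗ e_0 + e_2 ⊗ e_0 ⊗ e_1`. -/
noncomputable def e012 : (Fin 3 → Fin 3) → ℂ :=
  fun v => (if v = ![0, 1, 2] then 1 else 0) + (if v = ![1, 2, 0] then 1 else 0) +
    (if v = ![2, 0, 1] then 1 else 0)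

set_option maxHeartbeats 1000000 in
/-- With `M_{0,λ} = λ²E_{11}`, `M_{1,λ} = λ⁻¹E_{12}`, `M_{2,λ} = λ⁻¹E_{21}` one has
`T_3(M_{0,λ}, M_{1,λ}, M_{2,λ}) = λ⁶e_{000} + e_{012}`; hence `e_{012}` lies in the
closure of `uMPS(2,3,3)`. -/
theorem stmt_12 :
    (∀ lam : ℂ, lam ≠ 0 →
      uT 2 3 3 ![lam ^ 2 • Matrix.single 0 0 (1 : ℂ),
          lam⁻¹ • Matrix.single 0 1 (1 : ℂ),
          lam⁻¹ • Matrix.single 1 0 (1 : ℂ)] =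
        fun v => lam ^ 6 * e000 v + e012 v) ∧
    e012 ∈ closure (uMPS 2 3 3) := by
  have key : ∀ lam : ℂ, lam ≠ 0 →
      uT 2 3 3 ![lam ^ 2 • Matrix.single 0 0 (1 : ℂ),
          lam⁻¹ • Matrix.single 0 1 (1 : ℂ),
          lam⁻¹ • Matrix.single 1 0 (1 : ℂ)] =
        fun v => lam ^ 6 * e000 v + e012 v := by
    intro lam hl
    funext v
    have hv : v = ![v 0, v 1, v 2] := by funext i; fin_cases i <;> rfl
    rw [hv]
    generalize v 0 = i
    generalize v 1 = j
    generalize v 2 = k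
    fin_cases i <;> fin_cases j <;> fin_cases k <;>
      simp only [uT, e000, e012, List.ofFn_succ, List.ofFn_zero, List.prod_cons, List.prod_nil,
        mul_one, Matrix.trace, Matrix.diag, Matrix.mul_apply, Matrix.single_apply, Matrix.cons_val_succ,
        Matrix.smul_apply, Fin.sum_univ_two, Matrix.cons_val_zero, Matrix.cons_val_one,
        Matrix.head_cons, Fin.isValue, smul_eq_mul, funext_iff, Fin.forall_fin_succ,
        Matrix.cons_val_fin_one]
    all_goals norm_num [Fin.ext_iff]
    all_goals (try field_simp)
    all_goals ring
  refine ⟨key, ?_⟩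
  set lamn : ℕ → ℂ := fun n => ((1 / (n + 1) : ℝ) : ℂ) with hlamn
  have hne : ∀ n : ℕ, lamn n ≠ 0 := by
    intro n
    simp only [hlamn, ne_eq, Complex.ofReal_eq_zero, one_div, inv_eq_zero]
    positivity
  have h0 : Filter.Tendsto lamn Filter.atTop (nhds 0) := by
    have := tendsto_one_div_add_atTop_nhds_zero_nat (𝕜 := ℝ)
    have h := (Complex.continuous_ofReal.tendsto 0).comp this
    simpa [hlamn, Function.comp_def] using h
  refine mem_closure_of_tendsto (b := Filter.atTop) (f := fun n : ℕ =>
    uT 2 3 3 ![lamn n ^ 2 • Matrix.single 0 0 (1 : ℂ),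
      (lamn n)⁻¹ • Matrix.single 0 1 (1 : ℂ),
      (lamn n)⁻¹ • Matrix.single 1 0 (1 : ℂ)]) ?_ ?_
  · rw [tendsto_pi_nhds]
    intro v
    have hlim : Filter.Tendsto (fun n => lamn n ^ 6 * e000 v + e012 v) Filter.atTop
        (nhds (e012 v)) := by
      have := ((h0.pow 6).mul_const (e000 v)).add_const (e012 v)
      simpa using this
    refine hlim.congr fun n => ?_
    rw [key (lamn n) (hne n)]
  · filter_upwards with n
    exact Set.mem_range_self _
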